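/- arXiv:2106.11191 — 6 statements merged into one kernel-verified Lean document; each statement's English description precedes it below -/
import Mathlib

section
/- The ω-order is a strict total order on nonempty strings: for any two nonempty strings S and T over a linearly ordered alphabet, exactly one of the following holds: S ≺_ω T, T ≺_ω S, or S = T. -/
/-- `listPow S k` is the `k`-fold concatenation `S^k` of the string `S`. -/
def listPow {α : Type*} (S : List α) : ℕ → List α
  | 0 => []
  | n + 1 => S ++ listPow S n

/-- A string is primitive if `S = R^k` implies `S = R` and `k = 1`. -/
def IsPrimitiveStr {α : Type*} (S : List α) : Prop :=
  S ≠ [] ∧ ∀ (R : List α) (k : ℕ), S = listPow R k → S = R ∧ k = 1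

/-- The length of the primitive root of `S`: the least positive `d` such that
`S` is the `(|S|/d)`-th power of its length-`d` prefix. -/
noncomputable def rootLen {α : Type*} (S : List α) : ℕ :=
  sInf {d | 0 < d ∧ listPow (S.take d) (S.length / d) = S}

/-- The primitive root of a (nonempty) string `S`. -/
noncomputable def listRoot {α : Type*} (S : List α) : List α := S.take (rootLen S)

/-- `omegaSeq S hS` is the infinite sequence `S^ω` obtained by repeating the
nonempty string `S` forever; `omegaSeq S hS n = S[(n mod |S|) + 1]` (1-based). -/
def omegaSeq {α : Type*} (S : List α) (hS : S ≠ []) (n : ℕ) : α :=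
  S.get ⟨n % S.length, Nat.mod_lt n (List.length_pos_iff.mpr hS)⟩

/-- Lexicographic order on infinite sequences: they differ somewhere and at the
first differing position the left one is smaller. -/
def SeqLexLt {α : Type*} [LinearOrder α] (f g : ℕ → α) : Prop :=
  ∃ n, (∀ m, m < n → f m = g m) ∧ f n < g n

/-- The ω-order on nonempty strings: `S ≺_ω T` iff either `root S = root T` and
`|S| < |T|`, or `S^ω <_lex T^ω`. -/
def OmegaLt {α : Type*} [LinearOrder α] (S T : List α) : Prop :=
  ∃ (hS : S ≠ []) (hT : T ≠ []),
    (listRoot S = listRoot T ∧ S.length < T.length) ∨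
      SeqLexLt (omegaSeq S hS) (omegaSeq T hT)

/-- `conj T i = T[i..n]T[1..i-1]`, the `i`-th rotation (conjugate) of `T`
(1-based index, taken cyclically). -/
def conj {α : Type*} (T : List α) (i : ℕ) : List α := T.rotate (i - 1)

theorem conj_ne_nil {α : Type*} {T : List α} (hT : T ≠ []) (i : ℕ) : conj T i ≠ [] := by
  intro h
  apply hT
  have h' := congrArg List.length h
  simp only [conj, List.length_rotate, List.length_nil] at h'
  exact List.length_eq_zero_iff.mp h'

theorem listPow_ne_nil {α : Type*} {S : List α} (hS : S ≠ []) {r : ℕ} (hr : 1 ≤ r) :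
    listPow S r ≠ [] := by
  cases r with
  | zero => omega
  | succ n =>
    intro h
    exact hS (List.append_eq_nil_iff.mp h).1

/-- Lexicographic order on finite strings. -/
def LexLt {α : Type*} [LinearOrder α] (U V : List α) : Prop := List.Lex (· < ·) U V

/-- Position `i` of `T` is cyclic S-type if `conj_i(T) <_lex conj_{i+1}(T)`. -/
def SType {α : Type*} [LinearOrder α] (T : List α) (i : ℕ) : Prop :=
  LexLt (conj T i) (conj T (i + 1))

/-- Position `i` of `T` is cyclic L-type if `conj_i(T) >_lex conj_{i+1}(T)`. -/
def LType {α : Type*} [LinearOrder α] (T : List α) (i : ℕ) : Prop :=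
  LexLt (conj T (i + 1)) (conj T i)

/-- `cyc T hT i` is the character `T[i]`, 1-based and taken cyclically. -/
def cyc {α : Type*} (T : List α) (hT : T ≠ []) (i : ℕ) : α := omegaSeq T hT (i - 1)

/-- A cyclic S-type position `i` is LMS if position `i-1` (cyclically, so
position `0` means `n`) is cyclic L-type. -/
def IsLMS {α : Type*} [LinearOrder α] (T : List α) (i : ℕ) : Prop :=
  SType T i ∧ LType T (if i = 1 then T.length else i - 1)

/-- The cyclic distance from position `i` to the first LMS position of `T`
strictly after `i` (in cyclic order). -/
noncomputable def lmsDist {α : Type*} [LinearOrder α] (T : List α) (i : ℕ) : ℕ :=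
  sInf {m | 0 < m ∧ IsLMS T ((i + m - 1) % T.length + 1)}

/-- The LMS-prefix of `conj_i(T)`: the cyclic factor of `T` from position `i`
to the first LMS position strictly after `i`, inclusive at both ends. -/
noncomputable def lmsPrefix {α : Type*} [LinearOrder α] (T : List α) (i : ℕ) : List α :=
  (conj T i ++ conj T i).take (lmsDist T i + 1)

/-- The LMS-order: `U <_LMS V` iff `V` is a proper prefix of `U`, or neither is
a prefix of the other and `U <_lex V`. -/
def LMSLt {α : Type*} [LinearOrder α] (U V : List α) : Prop :=
  (V <+: U ∧ V ≠ U) ∨ (¬ U <+: V ∧ ¬ V <+: U ∧ LexLt U V)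

section AuxOmega

variable {α : Type*}

theorem aux_listPow_length (S : List α) (k : ℕ) : (listPow S k).length = k * S.length := by
  induction k with
  | zero => simp [listPow]
  | succ n ih => simp [listPow, ih, Nat.succ_mul]; ring

theorem aux_getElem_congr (l : List α) {i j : ℕ} (h : i = j) (hi : i < l.length) :
    l[i] = l[j]'(h ▸ hi) := by subst h; rfl

theorem aux_listPow_getElem (R : List α) (hR : R ≠ []) (k i : ℕ)
    (hi : i < (listPow R k).length) :
    (listPow R k)[i] = R[i % R.length]'(Nat.mod_lt _ (List.length_pos_iff.mpr hR)) := by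
  have hRl : 0 < R.length := List.length_pos_iff.mpr hR
  induction k generalizing i with
  | zero => simp [listPow] at hi
  | succ n ih =>
    have e : listPow R (n+1) = R ++ listPow R n := rfl
    rw [List.getElem_of_eq e]
    rcases Nat.lt_or_ge i R.length with h | h
    · rw [List.getElem_append_left h]
      exact aux_getElem_congr R (Nat.mod_eq_of_lt h).symm _
    · have hi' : i - R.length < (listPow R n).length := by
        rw [aux_listPow_length] at hi ⊢
        have h2 : (n + 1) * R.length = n * R.length + R.length := by ring
        omega
      rw [List.getElem_append_right h, ih _ hi']
      exact aux_getElem_congr R (Nat.mod_eq_sub_mod h).symm _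

theorem aux_omegaSeq_eq (S : List α) (hS : S ≠ []) (n : ℕ) :
    omegaSeq S hS n = S[n % S.length]'(Nat.mod_lt n (List.length_pos_iff.mpr hS)) := rfl

theorem aux_omegaSeq_congr {S T : List α} (h : S = T) (hS : S ≠ []) (hT : T ≠ []) :
    omegaSeq S hS = omegaSeq T hT := by subst h; rfl

theorem aux_omegaSeq_getElem (S : List α) (hS : S ≠ []) {i : ℕ} (hi : i < S.length) :
    omegaSeq S hS i = S[i] := by
  rw [aux_omegaSeq_eq]
  exact aux_getElem_congr S (Nat.mod_eq_of_lt hi) _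

/-- Periodicity of sequences. -/
def Per (f : ℕ → α) (p : ℕ) : Prop := ∀ n, f (n + p) = f n

theorem aux_per_add_mul {f : ℕ → α} {p : ℕ} (h : Per f p) (n k : ℕ) :
    f (n + k * p) = f n := by
  induction k with
  | zero => simp
  | succ m ih => rw [Nat.succ_mul, ← Nat.add_assoc, h, ih]

theorem aux_per_mod {f : ℕ → α} {p : ℕ} (hp : 0 < p) (h : Per f p) (n : ℕ) :
    f n = f (n % p) := by
  conv_lhs => rw [show n = n % p + (n / p) * p by
    have := Nat.mod_add_div n p; rw [mul_comm (n/p) p]; omega]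
  exact aux_per_add_mul h _ _

/-- Minimal positive period. -/
noncomputable def minPer (f : ℕ → α) : ℕ := sInf {p | 0 < p ∧ Per f p}

theorem aux_minPer_mem {f : ℕ → α} (hne : {p | 0 < p ∧ Per f p}.Nonempty) :
    0 < minPer f ∧ Per f (minPer f) := Nat.sInf_mem hne

theorem aux_minPer_dvd {f : ℕ → α} (hne : {p | 0 < p ∧ Per f p}.Nonempty)
    {q : ℕ} (h : Per f q) : minPer f ∣ q := by
  obtain ⟨hp, hper⟩ := aux_minPer_mem hne
  set p := minPer f with hpdef
  have hmod : Per f (q % p) := by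
    intro n
    have h1 : f (n + q) = f n := h n
    have e : q % p + p * (q / p) = q := Nat.mod_add_div q p
    have e2 : n + q = n + q % p + (q / p) * p := by rw [mul_comm (q/p) p]; omega
    rw [e2, aux_per_add_mul hper] at h1
    exact h1
  by_contra hnd
  have hq0 : 0 < q % p := Nat.pos_of_ne_zero (fun h0 => hnd (Nat.dvd_of_mod_eq_zero h0))
  have h1 : p ≤ q % p := Nat.sInf_le ⟨hq0, hmod⟩
  have h2 : q % p < p := Nat.mod_lt _ hp
  omega

theorem aux_per_omegaSeq (S : List α) (hS : S ≠ []) : Per (omegaSeq S hS) S.length := by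
  intro n
  simp [omegaSeq, Nat.add_mod_right]

theorem aux_perSet_nonempty (S : List α) (hS : S ≠ []) :
    {p | 0 < p ∧ Per (omegaSeq S hS) p}.Nonempty :=
  ⟨S.length, List.length_pos_iff.mpr hS, aux_per_omegaSeq S hS⟩

theorem aux_rootSet_nonempty (S : List α) (hS : S ≠ []) :
    {d | 0 < d ∧ listPow (S.take d) (S.length / d) = S}.Nonempty := by
  refine ⟨S.length, List.length_pos_iff.mpr hS, ?_⟩
  rw [List.take_length, Nat.div_self (List.length_pos_iff.mpr hS)]
  simp [listPow]

theorem aux_rootSet_mem {S : List α} (hS : S ≠ []) {d : ℕ}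
    (hd : 0 < d ∧ listPow (S.take d) (S.length / d) = S) :
    d ≤ S.length ∧ d ∣ S.length ∧ Per (omegaSeq S hS) d := by
  obtain ⟨hd0, hpow⟩ := hd
  have hSl : 0 < S.length := List.length_pos_iff.mpr hS
  have hdle : d ≤ S.length := by
    by_contra hlt
    push_neg at hlt
    have : S.length / d = 0 := Nat.div_eq_of_lt hlt
    rw [this] at hpow
    exact hS hpow.symm
  have htl : (S.take d).length = d := by
    rw [List.length_take]; omega
  have hlen : (S.length / d) * d = S.length := by
    have := congrArg List.length hpow
    rw [aux_listPow_length, htl] at this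
    exact this
  have hdvd : d ∣ S.length := ⟨S.length / d, by rw [mul_comm]; omega⟩
  have hk : 1 ≤ S.length / d := by
    rcases Nat.eq_zero_or_pos (S.length / d) with h0 | h1
    · rw [h0] at hlen; omega
    · exact h1
  have hR : S.take d ≠ [] := by
    intro h; rw [h] at htl; simp at htl; omega
  have hSpow : S = listPow (S.take d) (S.length / d) := hpow.symm
  have heq : omegaSeq S hS = omegaSeq (S.take d) hR := by
    rw [aux_omegaSeq_congr hSpow hS (hSpow ▸ hS)]
    funext n
    rw [aux_omegaSeq_eq, aux_omegaSeq_eq, aux_listPow_getElem _ hR]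
    have : n % (listPow (S.take d) (S.length / d)).length % (S.take d).length
        = n % (S.take d).length := by
      rw [aux_listPow_length]
      exact Nat.mod_mod_of_dvd n ⟨S.length / d, mul_comm _ _⟩
    exact aux_getElem_congr _ this _
  refine ⟨hdle, hdvd, ?_⟩
  rw [heq]
  have := aux_per_omegaSeq (S.take d) hR
  rwa [htl] at this

theorem aux_rootLen_eq_minPer (S : List α) (hS : S ≠ []) :
    rootLen S = minPer (omegaSeq S hS) := by
  have hSl : 0 < S.length := List.length_pos_iff.mpr hS
  obtain ⟨hp0, hper⟩ := aux_minPer_mem (aux_perSet_nonempty S hS)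
  set p := minPer (omegaSeq S hS) with hpdef
  have hpdvd : p ∣ S.length := aux_minPer_dvd (aux_perSet_nonempty S hS) (aux_per_omegaSeq S hS)
  have hple : p ≤ S.length := Nat.le_of_dvd hSl hpdvd
  apply le_antisymm
  · -- rootLen S ≤ p : show p is in the root set
    apply Nat.sInf_le
    refine ⟨hp0, ?_⟩
    have htl : (S.take p).length = p := by rw [List.length_take]; omega
    apply List.ext_getElem
    · rw [aux_listPow_length, htl, Nat.div_mul_cancel hpdvd]
    · intro i h1 h2
      rw [aux_listPow_getElem _ (by intro h; rw [h] at htl; simp at htl; omega)]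
      have e1 : i % (S.take p).length = i % p := by rw [htl]
      rw [aux_getElem_congr _ e1, List.getElem_take]
      have him : i % p < S.length := lt_of_lt_of_le (Nat.mod_lt _ hp0) hple
      rw [← aux_omegaSeq_getElem S hS him, ← aux_omegaSeq_getElem S hS h2,
        ← aux_per_mod hp0 hper]
  · -- p ≤ rootLen S
    obtain ⟨hr0, hrpow⟩ := Nat.sInf_mem (aux_rootSet_nonempty S hS)
    obtain ⟨_, _, hrper⟩ := aux_rootSet_mem hS ⟨hr0, hrpow⟩
    exact Nat.sInf_le ⟨hr0, hrper⟩

theorem aux_listRoot_eq_ofFn (S : List α) (hS : S ≠ []) :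
    listRoot S = List.ofFn (fun i : Fin (minPer (omegaSeq S hS)) => omegaSeq S hS i) := by
  have hSl : 0 < S.length := List.length_pos_iff.mpr hS
  obtain ⟨hp0, hper⟩ := aux_minPer_mem (aux_perSet_nonempty S hS)
  have hpdvd : minPer (omegaSeq S hS) ∣ S.length :=
    aux_minPer_dvd (aux_perSet_nonempty S hS) (aux_per_omegaSeq S hS)
  have hple : minPer (omegaSeq S hS) ≤ S.length := Nat.le_of_dvd hSl hpdvd
  rw [listRoot, aux_rootLen_eq_minPer S hS]
  apply List.ext_getElem
  · rw [List.length_take, List.length_ofFn]; omega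
  · intro i h1 h2
    rw [List.length_take] at h1
    rw [List.getElem_take, List.getElem_ofFn]
    exact (aux_omegaSeq_getElem S hS (show i < S.length by omega)).symm

theorem aux_listRoot_ne_nil (S : List α) (hS : S ≠ []) : listRoot S ≠ [] := by
  have hm : 0 < rootLen S ∧ listPow (S.take (rootLen S)) (S.length / rootLen S) = S :=
    Nat.sInf_mem (aux_rootSet_nonempty S hS)
  obtain ⟨hle, -, -⟩ := aux_rootSet_mem hS hm
  have hr0 := hm.1
  intro h
  have hlen := congrArg List.length h
  rw [listRoot, List.length_take] at hlen
  simp only [List.length_nil] at hlen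
  omega

theorem aux_omegaSeq_root (S : List α) (hS : S ≠ []) :
    omegaSeq S hS = omegaSeq (listRoot S) (aux_listRoot_ne_nil S hS) := by
  obtain ⟨hr0, hrpow⟩ := Nat.sInf_mem (aux_rootSet_nonempty S hS)
  obtain ⟨hle, hdvd, _⟩ := aux_rootSet_mem hS ⟨hr0, hrpow⟩
  have hSpow : S = listPow (listRoot S) (S.length / rootLen S) := hrpow.symm
  rw [aux_omegaSeq_congr hSpow hS (hSpow ▸ hS)]
  funext n
  rw [aux_omegaSeq_eq, aux_omegaSeq_eq, aux_listPow_getElem _ (aux_listRoot_ne_nil S hS)]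
  have : n % (listPow (listRoot S) (S.length / rootLen S)).length % (listRoot S).length
      = n % (listRoot S).length := by
    rw [aux_listPow_length]
    exact Nat.mod_mod_of_dvd n ⟨S.length / rootLen S, mul_comm _ _⟩
  exact aux_getElem_congr _ this _

theorem aux_seq_of_root {S T : List α} (hS : S ≠ []) (hT : T ≠ [])
    (h : listRoot S = listRoot T) : omegaSeq S hS = omegaSeq T hT := by
  rw [aux_omegaSeq_root S hS, aux_omegaSeq_root T hT]
  exact aux_omegaSeq_congr h _ _

theorem aux_root_of_seq {S T : List α} (hS : S ≠ []) (hT : T ≠ [])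
    (h : omegaSeq S hS = omegaSeq T hT) : listRoot S = listRoot T := by
  rw [aux_listRoot_eq_ofFn S hS, aux_listRoot_eq_ofFn T hT]
  congr 1
  · rw [h]
  · rw [h]

theorem aux_seqLexLt_irrefl (f : ℕ → α) [LinearOrder α] : True := trivial

section Ordered
variable [LinearOrder α]

theorem aux_seqLex_irrefl (f : ℕ → α) : ¬ SeqLexLt f f := by
  rintro ⟨n, -, h⟩; exact lt_irrefl _ h

theorem aux_seqLex_asymm {f g : ℕ → α} (h : SeqLexLt f g) : ¬ SeqLexLt g f := by
  obtain ⟨n, hn, hlt⟩ := h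
  rintro ⟨m, hm, hlt'⟩
  rcases lt_trichotomy n m with hc | hc | hc
  · rw [hm n hc] at hlt; exact lt_irrefl _ (hlt.trans hlt)
  · subst hc; exact lt_irrefl _ (hlt.trans hlt')
  · rw [hn m hc] at hlt'; exact lt_irrefl _ (hlt'.trans hlt')

theorem aux_seqLex_trichotomy (f g : ℕ → α) : SeqLexLt f g ∨ SeqLexLt g f ∨ f = g := by
  by_cases hfg : f = g
  · exact Or.inr (Or.inr hfg)
  · have hne : {n | f n ≠ g n}.Nonempty := by
      by_contra h
      rw [Set.not_nonempty_iff_eq_empty] at h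
      apply hfg
      funext n
      by_contra hn
      exact (Set.eq_empty_iff_forall_notMem.mp h n) hn
    set N := sInf {n | f n ≠ g n} with hN
    have hmem : f N ≠ g N := Nat.sInf_mem hne
    have hlow : ∀ m, m < N → f m = g m := by
      intro m hm
      by_contra hc
      have hle : N ≤ m := Nat.sInf_le (show m ∈ {n | f n ≠ g n} from hc)
      omega
    rcases lt_or_gt_of_ne hmem with hlt | hgt
    · exact Or.inl ⟨N, hlow, hlt⟩
    · exact Or.inr (Or.inl ⟨N, fun m hm => (hlow m hm).symm, hgt⟩)

theorem aux_eq_of_seq_len {S T : List α} (hS : S ≠ []) (hT : T ≠ [])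
    (hseq : omegaSeq S hS = omegaSeq T hT) (hlen : S.length = T.length) : S = T := by
  apply List.ext_getElem hlen
  intro i h1 h2
  rw [← aux_omegaSeq_getElem S hS h1, ← aux_omegaSeq_getElem T hT h2, hseq]

theorem aux_not_omegaLt_of_lex {S T : List α} (hS : S ≠ []) (hT : T ≠ [])
    (h : SeqLexLt (omegaSeq S hS) (omegaSeq T hT)) : ¬ OmegaLt T S := by
  rintro ⟨hT', hS', hroot | hlex⟩
  · have := aux_seq_of_root hT' hS' hroot.1
    have h' : SeqLexLt (omegaSeq S hS) (omegaSeq S hS) := by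
      have e : omegaSeq T hT = omegaSeq S hS := by
        rw [aux_omegaSeq_congr rfl hT hT']; exact this.trans (aux_omegaSeq_congr rfl hS' hS)
      rwa [e] at h
    exact aux_seqLex_irrefl _ h'
  · exact aux_seqLex_asymm h (by
      rwa [aux_omegaSeq_congr rfl hT' hT, aux_omegaSeq_congr rfl hS' hS] at hlex)

end Ordered

end AuxOmega

/-- The ω-order is a strict total order on nonempty strings:
for nonempty `S`, `T`, exactly one of `S ≺_ω T`, `T ≺_ω S`, `S = T` holds. -/
theorem omegaLt_trichotomy {α : Type*} [LinearOrder α] (S T : List α)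
    (hS : S ≠ []) (hT : T ≠ []) :
    (OmegaLt S T ∧ ¬ OmegaLt T S ∧ S ≠ T) ∨
    (OmegaLt T S ∧ ¬ OmegaLt S T ∧ S ≠ T) ∨
    (S = T ∧ ¬ OmegaLt S T ∧ ¬ OmegaLt T S) := by
  rcases aux_seqLex_trichotomy (omegaSeq S hS) (omegaSeq T hT) with h | h | h
  · refine Or.inl ⟨⟨hS, hT, Or.inr h⟩, aux_not_omegaLt_of_lex hS hT h, ?_⟩
    rintro rfl
    exact aux_seqLex_irrefl _ h
  · refine Or.inr (Or.inl ⟨⟨hT, hS, Or.inr h⟩, aux_not_omegaLt_of_lex hT hS h, ?_⟩)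
    rintro rfl
    exact aux_seqLex_irrefl _ h
  · have hroot : listRoot S = listRoot T := aux_root_of_seq hS hT h
    rcases lt_trichotomy S.length T.length with hl | hl | hl
    · refine Or.inl ⟨⟨hS, hT, Or.inl ⟨hroot, hl⟩⟩, ?_, ?_⟩
      · rintro ⟨hT', hS', ⟨_, hl'⟩ | hlex⟩
        · omega
        · exact aux_seqLex_irrefl (omegaSeq T hT')
            (by rwa [show omegaSeq S hS' = omegaSeq T hT' from h] at hlex)
      · intro he; rw [he] at hl; omega
    · have heq : S = T := aux_eq_of_seq_len hS hT h hl
      refine Or.inr (Or.inr ⟨heq, ?_, ?_⟩)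
      · rintro ⟨hS', hT', ⟨_, hl'⟩ | hlex⟩
        · omega
        · exact aux_seqLex_irrefl (omegaSeq S hS')
            (by rwa [show omegaSeq T hT' = omegaSeq S hS' from h.symm] at hlex)
      · rintro ⟨hT', hS', ⟨_, hl'⟩ | hlex⟩
        · omega
        · exact aux_seqLex_irrefl (omegaSeq T hT')
            (by rwa [show omegaSeq S hS' = omegaSeq T hT' from h] at hlex)
    · refine Or.inr (Or.inl ⟨⟨hT, hS, Or.inl ⟨hroot.symm, hl⟩⟩, ?_, ?_⟩)
      · rintro ⟨hS', hT', ⟨_, hl'⟩ | hlex⟩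
        · omega
        · exact aux_seqLex_irrefl (omegaSeq S hS')
            (by rwa [show omegaSeq T hT' = omegaSeq S hS' from h.symm] at hlex)
      · intro he; rw [he] at hl; omega
end

section
/- Let T be a primitive string of length n ≥ 2, viewed cyclically, and let 1 ≤ i ≤ n. If T[i] = T[i+1] (indices cyclic), then position i has the same cyclic type as position i+1: i is cyclic S-type if and only if i+1 is cyclic S-type, and i is cyclic L-type if and only if i+1 is cyclic L-type. -/
-- aux

lemma lex_append_iff {α : Type*} {r : α → α → Prop} :
    ∀ {X Y : List α}, X.length = Y.length → X ≠ Y → ∀ (s t : List α),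
      (List.Lex r (X ++ s) (Y ++ t) ↔ List.Lex r X Y) := by
  intro X
  induction X with
  | nil =>
    intro Y h hne
    cases Y with
    | nil => exact absurd rfl hne
    | cons b Y => simp at h
  | cons a X ih =>
    intro Y h hne s t
    cases Y with
    | nil => simp at h
    | cons b Y =>
      by_cases hab : a = b
      · subst hab
        have hXY : X ≠ Y := fun h' => hne (by rw [h'])
        have hlen : X.length = Y.length := by simpa using h
        constructor
        · intro hl
          cases hl with
          | rel h => exact List.Lex.rel h
          | cons h => exact List.Lex.cons ((ih hlen hXY s t).mp h)
        · intro hl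
          cases hl with
          | rel h => exact List.Lex.rel h
          | cons h => exact List.Lex.cons ((ih hlen hXY s t).mpr h)
      · constructor
        · intro hl
          cases hl with
          | rel h => exact List.Lex.rel h
          | cons h => exact absurd rfl hab
        · intro hl
          cases hl with
          | rel h => exact List.Lex.rel h
          | cons h => exact absurd rfl hab

lemma append_singleton_eq_cons {α : Type*} {c : α} :
    ∀ {x : List α}, x ++ [c] = c :: x → x = List.replicate x.length c := by
  intro x
  induction x with
  | nil => intro; rfl
  | cons b t ih =>
    intro h
    simp only [List.cons_append, List.cons.injEq] at h
    obtain ⟨rfl, h2⟩ := h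
    simp only [List.length_cons, List.replicate_succ, List.cons.injEq, true_and]
    exact ih h2

lemma listPow_singleton {α : Type*} (a : α) : ∀ n, listPow [a] n = List.replicate n a := by
  intro n
  induction n with
  | zero => rfl
  | succ k ih => simp [listPow, ih, List.replicate_succ]

lemma cyc_eq_head {α : Type*} (T : List α) (hT : T ≠ []) (i : ℕ) :
    cyc T hT i = (conj T i).head (conj_ne_nil hT i) := by
  have hne := conj_ne_nil hT i
  rw [List.head_eq_getElem]
  simp only [conj, List.getElem_rotate, cyc, omegaSeq, List.get_eq_getElem]
  congr 1
  simp

/-- For a primitive string `T` of length `n ≥ 2` (viewed cyclically)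
and `1 ≤ i ≤ n`: if `T[i] = T[i+1]` then position `i` has the same cyclic type
as position `i+1`. -/
theorem type_eq_of_adjacent_chars_eq {α : Type*} [LinearOrder α] (T : List α)
    (hT : IsPrimitiveStr T) (h2 : 2 ≤ T.length)
    (i : ℕ) (hi1 : 1 ≤ i) (hi2 : i ≤ T.length)
    (heq : cyc T hT.1 i = cyc T hT.1 (i + 1)) :
    (SType T i ↔ SType T (i + 1)) ∧ (LType T i ↔ LType T (i + 1)) := by
  have hTne := hT.1
  set n := T.length with hn
  obtain ⟨a, X, h1⟩ := List.exists_cons_of_ne_nil (conj_ne_nil hTne i)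
  obtain ⟨b, Y, h1'⟩ := List.exists_cons_of_ne_nil (conj_ne_nil hTne (i+1))
  have hrot : conj T (i+1) = (conj T i).rotate 1 := by
    simp only [conj, List.rotate_rotate]
    congr 1
    omega
  have h2' : conj T (i+1) = X ++ [a] := by
    rw [hrot, h1]
    simp [List.rotate_cons_succ]
  have hrot2 : conj T (i+1+1) = (conj T (i+1)).rotate 1 := by
    simp only [conj, List.rotate_rotate]
    congr 1
  have hab : a = b := by
    have e1 := cyc_eq_head T hTne i
    have e2 := cyc_eq_head T hTne (i+1)
    simp only [h1, List.head_cons] at e1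
    simp only [h1', List.head_cons] at e2
    rw [e1, e2] at heq
    exact heq
  subst hab
  have h3 : conj T (i+1+1) = Y ++ [a] := by
    rw [hrot2, h1']
    simp [List.rotate_cons_succ]
  -- lengths
  have hlc : (conj T i).length = n := by simp [conj, hn]
  have hlc1 : (conj T (i+1)).length = n := by simp [conj, hn]
  have hlX : X.length = n - 1 := by
    have := congrArg List.length h1
    simp at this
    omega
  have hlY : Y.length = n - 1 := by
    have := congrArg List.length h1'
    simp at this
    omega
  -- X ≠ Y
  have hXY : X ≠ Y := by
    intro hxy
    have hxa : X ++ [a] = a :: X := by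
      rw [← h2', h1', hxy]
    have hrep : X = List.replicate X.length a := append_singleton_eq_cons hxa
    have hconj : conj T i = List.replicate n a := by
      rw [h1, hrep]
      rw [← List.replicate_succ]
      congr 1
      omega
    have hTrep : T = List.replicate n a := by
      apply List.eq_replicate_iff.mpr
      refine ⟨rfl, ?_⟩
      intro c hc
      have hc' : c ∈ conj T i := by
        simp only [conj, List.mem_rotate]
        exact hc
      rw [hconj] at hc'
      exact (List.eq_of_mem_replicate hc')
    have := hT.2 [a] n (by rw [hTrep, listPow_singleton])
    omega
  have hYX : Y ≠ X := fun h => hXY h.symm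
  have hlen : X.length = Y.length := by omega
  constructor
  · rw [show SType T i = List.Lex (· < ·) (a :: X) (a :: Y) by
        rw [SType, LexLt, h1, h1'],
       show SType T (i+1) = List.Lex (· < ·) (X ++ [a]) (Y ++ [a]) by
        rw [SType, LexLt, h2', h3]]
    rw [List.lex_cons_iff, lex_append_iff hlen hXY]
  · rw [show LType T i = List.Lex (· < ·) (a :: Y) (a :: X) by
        rw [LType, LexLt, h1, h1'],
       show LType T (i+1) = List.Lex (· < ·) (Y ++ [a]) (X ++ [a]) by
        rw [LType, LexLt, h2', h3]]
    rw [List.lex_cons_iff, lex_append_iff hlen.symm hYX]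
end

section
/- Let T be a primitive string of length n ≥ 2, viewed cyclically, and let 1 ≤ i ≤ n. Let ℓ be the smallest positive integer such that T[i+ℓ] ≠ T[i] (indices cyclic; such ℓ exists since T is primitive of length ≥ 2), and let i' = i + ℓ. Then position i is cyclic S-type if and only if T[i'] > T[i]. -/
lemma lex_of_firstDiff {α : Type*} [LinearOrder α] :
    ∀ (k : ℕ) (U V : List α) (hU : k < U.length) (hV : k < V.length),
    (∀ j, (hj : j < k) → U.get ⟨j, by omega⟩ = V.get ⟨j, by omega⟩) →
    U.get ⟨k, hU⟩ < V.get ⟨k, hV⟩ → List.Lex (· < ·) U V := by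
  intro k
  induction k with
  | zero =>
    intro U V hU hV _ hlt
    match U, V with
    | a :: U', b :: V' => exact List.Lex.rel hlt
  | succ k ih =>
    intro U V hU hV heq hlt
    match U, V with
    | a :: U', b :: V' =>
      have h0 : a = b := heq 0 (Nat.succ_pos k)
      subst h0
      exact List.Lex.cons (ih U' V' (by simpa using hU) (by simpa using hV)
        (fun j hj => heq (j+1) (by omega)) hlt)

/-- For a primitive string `T` of length `n ≥ 2` (viewed cyclically),
`1 ≤ i ≤ n`, and `ℓ` the smallest positive integer with `T[i+ℓ] ≠ T[i]`
(indices cyclic), position `i` is cyclic S-type iff `T[i+ℓ] > T[i]`. -/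
theorem sType_iff_next_diff_char_gt {α : Type*} [LinearOrder α] (T : List α)
    (hT : IsPrimitiveStr T) (h2 : 2 ≤ T.length)
    (i : ℕ) (hi1 : 1 ≤ i) (hi2 : i ≤ T.length)
    (ℓ : ℕ) (hℓ : 0 < ℓ)
    (hne : cyc T hT.1 (i + ℓ) ≠ cyc T hT.1 i)
    (hmin : ∀ m, 0 < m → m < ℓ → cyc T hT.1 (i + m) = cyc T hT.1 i) :
    SType T i ↔ cyc T hT.1 i < cyc T hT.1 (i + ℓ) := by
  have hn0 : 0 < T.length := by omega
  have hcyc : ∀ j : ℕ, 1 ≤ j →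
      cyc T hT.1 j = T.get ⟨(j - 1) % T.length, Nat.mod_lt _ hn0⟩ := by
    intro j hj; rfl
  have hper : ∀ j l : ℕ, 1 ≤ j →
      cyc T hT.1 (j + l) = cyc T hT.1 (j + l % T.length) := by
    intro j l hj
    rw [hcyc _ (by omega), hcyc _ (by omega)]
    apply congrArg
    apply Fin.ext
    show (j + l - 1) % T.length = (j + l % T.length - 1) % T.length
    have e1 : j + l - 1 = (j - 1) + l := by omega
    have e2 : j + l % T.length - 1 = (j - 1) + l % T.length := by omega
    rw [e1, e2, Nat.add_mod (j-1) l, Nat.add_mod (j-1) (l % T.length),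
      Nat.mod_mod_of_dvd _ dvd_rfl]
  have hℓn : ℓ < T.length := by
    by_contra hge
    push_neg at hge
    have h1 := hper i ℓ hi1
    rcases Nat.eq_zero_or_pos (ℓ % T.length) with h0 | hpos
    · rw [h0, Nat.add_zero] at h1; exact hne h1
    · have := hmin (ℓ % T.length) hpos (lt_of_lt_of_le (Nat.mod_lt _ hn0) hge)
      rw [h1] at hne; exact hne this
  have lenA : (conj T i).length = T.length := by simp [conj]
  have lenB : (conj T (i+1)).length = T.length := by simp [conj]
  have hA : ∀ k : ℕ, (hk : k < T.length) →
      (conj T i).get ⟨k, by omega⟩ = cyc T hT.1 (i + k) := by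
    intro k hk
    rw [hcyc _ (by omega)]
    show (T.rotate (i-1)).get _ = _
    refine (List.get_rotate T (i-1) ⟨k, by simpa using hk⟩).trans ?_
    apply congrArg
    apply Fin.ext
    show (k + (i - 1)) % T.length = (i + k - 1) % T.length
    congr 1
    omega
  have hB : ∀ k : ℕ, (hk : k < T.length) →
      (conj T (i+1)).get ⟨k, by omega⟩ = cyc T hT.1 (i + 1 + k) := by
    intro k hk
    rw [hcyc _ (by omega)]
    show (T.rotate (i+1-1)).get _ = _
    refine (List.get_rotate T (i+1-1) ⟨k, by simpa using hk⟩).trans ?_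
    apply congrArg
    apply Fin.ext
    show (k + (i + 1 - 1)) % T.length = (i + 1 + k - 1) % T.length
    congr 1
    omega
  have hkn : ℓ - 1 < T.length := by omega
  have hpref : ∀ j, (hj : j < ℓ - 1) →
      (conj T i).get ⟨j, by rw [lenA]; omega⟩ = (conj T (i+1)).get ⟨j, by rw [lenB]; omega⟩ := by
    intro j hj
    rw [hA j (by omega), hB j (by omega)]
    have h1 : cyc T hT.1 (i + j) = cyc T hT.1 i := by
      rcases Nat.eq_zero_or_pos j with h0 | hpos
      · rw [h0, Nat.add_zero]
      · exact hmin j hpos (by omega)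
    have h2 : cyc T hT.1 (i + 1 + j) = cyc T hT.1 i := by
      have e : i + 1 + j = i + (j + 1) := by omega
      rw [e]; exact hmin (j+1) (by omega) (by omega)
    rw [h1, h2]
  have hAk : (conj T i).get ⟨ℓ - 1, by omega⟩ = cyc T hT.1 i := by
    rw [hA (ℓ-1) hkn]
    rcases Nat.eq_or_lt_of_le hℓ with h1 | h1
    · have e : ℓ - 1 = 0 := by omega
      rw [e, Nat.add_zero]
    · exact hmin (ℓ-1) (by omega) (by omega)
  have hBk : (conj T (i+1)).get ⟨ℓ - 1, by omega⟩ = cyc T hT.1 (i + ℓ) := by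
    rw [hB (ℓ-1) hkn]
    congr 1
    omega
  constructor
  · intro h
    by_contra hnot
    push_neg at hnot
    have hlt : cyc T hT.1 (i + ℓ) < cyc T hT.1 i := lt_of_le_of_ne hnot hne
    have hBA : List.Lex (· < ·) (conj T (i+1)) (conj T i) :=
      lex_of_firstDiff (ℓ-1) _ _ (by omega) (by omega)
        (fun j hj => (hpref j hj).symm) (by rw [hAk, hBk]; exact hlt)
    exact (asymm hBA) h
  · intro hlt
    exact lex_of_firstDiff (ℓ-1) _ _ (by omega) (by omega) hpref
      (by rw [hAk, hBk]; exact hlt)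
end

section
/- Let U and V be primitive strings of length ≥ 2 over a linearly ordered alphabet, let 1 ≤ i ≤ |U| and 1 ≤ j ≤ |V| with U[i] = V[j], and suppose position i is cyclic L-type in U and position j is cyclic S-type in V. Then conj_i(U) ≺_ω conj_j(V). -/
private lemma lexExistsAux {α : Type*} [LinearOrder α] :
    ∀ {P Q : List α}, List.Lex (· < ·) P Q → P.length = Q.length →
      ∃ k, ∃ (hk : k < P.length) (hk' : k < Q.length),
        (∀ m, m < k → P[m]? = Q[m]?) ∧ P[k] < Q[k] := by
  intro P Q h
  induction h with
  | nil => intro hl; simp at hl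
  | rel hab =>
    intro _
    exact ⟨0, by simp, by simp, fun m hm => absurd hm (by omega), by simpa using hab⟩
  | cons h ih =>
    intro hl
    obtain ⟨k, hk, hk', hag, hlt⟩ := ih (by simpa using hl)
    refine ⟨k + 1, by simpa using Nat.succ_lt_succ hk,
      by simpa using Nat.succ_lt_succ hk', ?_, by simpa using hlt⟩
    intro m hm
    cases m with
    | zero => simp
    | succ m => simpa using hag m (by omega)

private lemma omegaSeq_of_lt {α : Type*} (A : List α) (hA : A ≠ []) (n : ℕ)
    (h : n < A.length) : omegaSeq A hA n = A[n]'h := by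
  simp only [omegaSeq, List.get_eq_getElem]
  congr 1
  exact Nat.mod_eq_of_lt h

private lemma omegaSeq_rotate_one {α : Type*} (A : List α) (hA : A ≠ [])
    (hA' : A.rotate 1 ≠ []) (n : ℕ) :
    omegaSeq (A.rotate 1) hA' n = omegaSeq A hA (n + 1) := by
  have hmod : (n % A.length + 1) % A.length = (n + 1) % A.length :=
    (Nat.mod_modEq n A.length).add_right 1
  simp only [omegaSeq, List.get_eq_getElem, List.getElem_rotate, List.length_rotate]
  congr 1

private lemma exists_lt_head_of_shift_lt {α : Type*} [LinearOrder α]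
    (A : List α) (hA : A ≠ []) (hlex : List.Lex (· < ·) (A.rotate 1) A) :
    ∃ k, (∀ m, m < k → omegaSeq A hA m = omegaSeq A hA 0) ∧
      omegaSeq A hA k < omegaSeq A hA 0 := by
  have hA' : A.rotate 1 ≠ [] := by
    simpa [List.rotate_eq_nil_iff] using hA
  obtain ⟨k0, hk0, hk0', hag, hlt⟩ := lexExistsAux hlex (by simp)
  have hlen : k0 < A.length := hk0'
  have hk0r : k0 < (A.rotate 1).length := hk0
  have hx : ∀ m, m < k0 → omegaSeq A hA (m + 1) = omegaSeq A hA m := by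
    intro m hm
    have hm' : m < A.length := lt_trans hm hlen
    have hmr : m < (A.rotate 1).length := by simpa using hm'
    have h1 : (A.rotate 1)[m]'hmr = A[m]'hm' := by
      have := hag m hm
      rw [List.getElem?_eq_getElem hmr, List.getElem?_eq_getElem hm'] at this
      exact Option.some_injective _ this
    rw [← omegaSeq_rotate_one A hA hA' m, omegaSeq_of_lt _ hA' m hmr,
        omegaSeq_of_lt A hA m hm', h1]
  have hconst : ∀ m, m ≤ k0 → omegaSeq A hA m = omegaSeq A hA 0 := by
    intro m hm
    induction m with
    | zero => rfl
    | succ m ih => rw [hx m (by omega)]; exact ih (by omega)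
  refine ⟨k0 + 1, fun m hm => hconst m (by omega), ?_⟩
  have h2 : omegaSeq A hA (k0 + 1) = (A.rotate 1)[k0]'hk0r := by
    rw [← omegaSeq_rotate_one A hA hA' k0]; exact omegaSeq_of_lt _ hA' k0 hk0r
  rw [h2, ← hconst k0 le_rfl, omegaSeq_of_lt A hA k0 hlen]
  exact hlt

private lemma exists_gt_head_of_lt_shift {α : Type*} [LinearOrder α]
    (A : List α) (hA : A ≠ []) (hlex : List.Lex (· < ·) A (A.rotate 1)) :
    ∃ k, (∀ m, m < k → omegaSeq A hA m = omegaSeq A hA 0) ∧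
      omegaSeq A hA 0 < omegaSeq A hA k := by
  have hA' : A.rotate 1 ≠ [] := by
    simpa [List.rotate_eq_nil_iff] using hA
  obtain ⟨k0, hk0, hk0', hag, hlt⟩ := lexExistsAux hlex (by simp)
  have hlen : k0 < A.length := hk0
  have hk0r : k0 < (A.rotate 1).length := hk0'
  have hx : ∀ m, m < k0 → omegaSeq A hA (m + 1) = omegaSeq A hA m := by
    intro m hm
    have hm' : m < A.length := lt_trans hm hlen
    have hmr : m < (A.rotate 1).length := by simpa using hm'
    have h1 : A[m]'hm' = (A.rotate 1)[m]'hmr := by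
      have := hag m hm
      rw [List.getElem?_eq_getElem hm', List.getElem?_eq_getElem hmr] at this
      exact Option.some_injective _ this
    rw [← omegaSeq_rotate_one A hA hA' m, omegaSeq_of_lt _ hA' m hmr,
        omegaSeq_of_lt A hA m hm', h1]
  have hconst : ∀ m, m ≤ k0 → omegaSeq A hA m = omegaSeq A hA 0 := by
    intro m hm
    induction m with
    | zero => rfl
    | succ m ih => rw [hx m (by omega)]; exact ih (by omega)
  refine ⟨k0 + 1, fun m hm => hconst m (by omega), ?_⟩
  have h2 : omegaSeq A hA (k0 + 1) = (A.rotate 1)[k0]'hk0r := by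
    rw [← omegaSeq_rotate_one A hA hA' k0]; exact omegaSeq_of_lt _ hA' k0 hk0r
  rw [h2, ← hconst k0 le_rfl, omegaSeq_of_lt A hA k0 hlen]
  exact hlt

private lemma conj_head {α : Type*} (T : List α) (hT : T ≠ []) (i : ℕ)
    (hc : conj T i ≠ []) : omegaSeq (conj T i) hc 0 = cyc T hT i := by
  simp only [cyc, omegaSeq, conj, List.get_eq_getElem, List.getElem_rotate,
    List.length_rotate, Nat.zero_mod, Nat.zero_add]

/-- For primitive strings `U`, `V` of length `≥ 2`, positions
`1 ≤ i ≤ |U|`, `1 ≤ j ≤ |V|` with `U[i] = V[j]`, if `i` is cyclic L-type in `U`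
and `j` is cyclic S-type in `V`, then `conj_i(U) ≺_ω conj_j(V)`. -/
theorem omegaLt_of_lType_sType {α : Type*} [LinearOrder α] (U V : List α)
    (hU : IsPrimitiveStr U) (hV : IsPrimitiveStr V)
    (hU2 : 2 ≤ U.length) (hV2 : 2 ≤ V.length)
    (i j : ℕ) (hi1 : 1 ≤ i) (hi2 : i ≤ U.length) (hj1 : 1 ≤ j) (hj2 : j ≤ V.length)
    (heq : cyc U hU.1 i = cyc V hV.1 j)
    (hL : LType U i) (hS : SType V j) :
    OmegaLt (conj U i) (conj V j) := by
  have hAne : conj U i ≠ [] := conj_ne_nil hU.1 i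
  have hBne : conj V j ≠ [] := conj_ne_nil hV.1 j
  have hrotU : (conj U i).rotate 1 = conj U (i + 1) := by
    simp only [conj, List.rotate_rotate]
    congr 1
    omega
  have hrotV : (conj V j).rotate 1 = conj V (j + 1) := by
    simp only [conj, List.rotate_rotate]
    congr 1
    omega
  have hLex1 : List.Lex (· < ·) ((conj U i).rotate 1) (conj U i) := by
    rw [hrotU]; exact hL
  have hLex2 : List.Lex (· < ·) (conj V j) ((conj V j).rotate 1) := by
    rw [hrotV]; exact hS
  obtain ⟨k, hkag, hklt⟩ := exists_lt_head_of_shift_lt (conj U i) hAne hLex1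
  obtain ⟨k', hk'ag, hk'lt⟩ := exists_gt_head_of_lt_shift (conj V j) hBne hLex2
  have hhead : omegaSeq (conj U i) hAne 0 = omegaSeq (conj V j) hBne 0 := by
    rw [conj_head U hU.1 i hAne, conj_head V hV.1 j hBne]
    exact heq
  refine ⟨hAne, hBne, Or.inr ?_⟩
  refine ⟨min k k', ?_, ?_⟩
  · intro m hm
    rw [hkag m (lt_of_lt_of_le hm (min_le_left _ _)), hhead,
        ← hk'ag m (lt_of_lt_of_le hm (min_le_right _ _))]
  · rcases le_or_gt k k' with h | h
    · rw [min_eq_left h]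
      rcases eq_or_lt_of_le h with rfl | h'
      · calc omegaSeq (conj U i) hAne k < omegaSeq (conj U i) hAne 0 := hklt
          _ = omegaSeq (conj V j) hBne 0 := hhead
          _ < omegaSeq (conj V j) hBne k := hk'lt
      · calc omegaSeq (conj U i) hAne k < omegaSeq (conj U i) hAne 0 := hklt
          _ = omegaSeq (conj V j) hBne 0 := hhead
          _ = omegaSeq (conj V j) hBne k := (hk'ag k h').symm
    · rw [min_eq_right (le_of_lt h)]
      calc omegaSeq (conj U i) hAne k' = omegaSeq (conj U i) hAne 0 := hkag k' h
        _ = omegaSeq (conj V j) hBne 0 := hhead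
        _ < omegaSeq (conj V j) hBne k' := hk'lt
end

section
/- Let A and B be primitive strings of length ≥ 2 over a linearly ordered alphabet, let 1 ≤ i ≤ |A| and 1 ≤ j ≤ |B|, let U be the LMS-prefix of conj_i(A) and V the LMS-prefix of conj_j(B). If U <_LMS V, then conj_i(A) ≺_ω conj_j(B). -/
namespace Aux14

def shiftSeq {α : Type*} (f : ℕ → α) (m : ℕ) : ℕ → α := fun t => f (m + t)

variable {α : Type*}

theorem shiftSeq_shiftSeq (f : ℕ → α) (a b : ℕ) :
    shiftSeq (shiftSeq f a) b = shiftSeq f (a + b) := by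
  funext t; simp [shiftSeq, Nat.add_assoc]

section Ord
variable [LinearOrder α]

theorem seqLexLt_irrefl (f : ℕ → α) : ¬ SeqLexLt f f := by
  rintro ⟨n, _, h⟩; exact lt_irrefl _ h

theorem seqLexLt_asymm {f g : ℕ → α} (h1 : SeqLexLt f g) (h2 : SeqLexLt g f) : False := by
  obtain ⟨n1, a1, l1⟩ := h1
  obtain ⟨n2, a2, l2⟩ := h2
  rcases lt_trichotomy n1 n2 with h | h | h
  · exact absurd l1 (by rw [a2 n1 h]; exact lt_irrefl _)
  · subst h; exact absurd (l1.trans l2) (lt_irrefl _)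
  · exact absurd l2 (by rw [a1 n2 h]; exact lt_irrefl _)

theorem seqLexLt_trans {f g h : ℕ → α} (h1 : SeqLexLt f g) (h2 : SeqLexLt g h) :
    SeqLexLt f h := by
  obtain ⟨n1, a1, l1⟩ := h1
  obtain ⟨n2, a2, l2⟩ := h2
  rcases lt_trichotomy n1 n2 with h | h | h
  · exact ⟨n1, fun m hm => (a1 m hm).trans (a2 m (hm.trans h)), by rw [← a2 n1 h]; exact l1⟩
  · subst h; exact ⟨n1, fun m hm => (a1 m hm).trans (a2 m hm), l1.trans l2⟩
  · exact ⟨n2, fun m hm => (a1 m (hm.trans h)).trans (a2 m hm), by rw [a1 n2 h]; exact l2⟩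

theorem seqLexLt_total {f g : ℕ → α} (h : f ≠ g) : SeqLexLt f g ∨ SeqLexLt g f := by
  have hex : ∃ n, f n ≠ g n := Function.ne_iff.mp h
  classical
  let k := Nat.find hex
  have hk : f k ≠ g k := Nat.find_spec hex
  have hag : ∀ m, m < k → f m = g m := fun m hm => by
    by_contra hc; exact absurd (Nat.find_le hc : k ≤ m) (by omega)
  rcases lt_or_gt_of_ne hk with h' | h'
  · exact Or.inl ⟨k, hag, h'⟩
  · exact Or.inr ⟨k, fun m hm => (hag m hm).symm, h'⟩

end Ord

theorem rotate_ne_nil {T : List α} (hT : T ≠ []) (r : ℕ) : T.rotate r ≠ [] := by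
  intro h
  apply hT
  have h' := congrArg List.length h
  simp only [List.length_rotate, List.length_nil] at h'
  exact List.length_eq_zero_iff.mp h'

theorem omegaSeq_eq (T : List α) (hT : T ≠ []) (u : ℕ) :
    omegaSeq T hT u = T[u % T.length]'(Nat.mod_lt u (List.length_pos_iff.mpr hT)) := rfl

theorem omegaSeq_lt (T : List α) (hT : T ≠ []) {u : ℕ} (h : u < T.length) :
    omegaSeq T hT u = T[u]'h := by
  simp only [omegaSeq_eq, Nat.mod_eq_of_lt h]

theorem omegaSeq_add_mul (T : List α) (hT : T ≠ []) (u c : ℕ) :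
    omegaSeq T hT (u + c * T.length) = omegaSeq T hT u := by
  simp only [omegaSeq_eq, Nat.add_mul_mod_self_right]

theorem omega_inj {x y : List α} (hx : x ≠ []) (hy : y ≠ []) (hlen : x.length = y.length)
    (h : ∀ u, omegaSeq x hx u = omegaSeq y hy u) : x = y := by
  apply List.ext_getElem hlen
  intro k h1 h2
  have := h k
  rwa [omegaSeq_lt _ _ h1, omegaSeq_lt _ _ h2] at this

theorem omega_congr_list {x y : List α} (hx : x ≠ []) (hy : y ≠ []) (h : x = y) :
    omegaSeq x hx = omegaSeq y hy := by
  subst h; rfl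

theorem omegaSeq_rotate (T : List α) (hT : T ≠ []) (r : ℕ) :
    omegaSeq (T.rotate r) (rotate_ne_nil hT r) = shiftSeq (omegaSeq T hT) r := by
  funext t
  simp only [shiftSeq, omegaSeq_eq, List.length_rotate]
  rw [List.getElem_rotate]
  have : (t % T.length + r) % T.length = (r + t) % T.length := by
    rw [Nat.mod_add_mod, Nat.add_comm]
  simp only [this]

theorem shiftSeq_omega_congr (T : List α) (hT : T ≠ []) {r r' : ℕ}
    (h : r % T.length = r' % T.length) :
    shiftSeq (omegaSeq T hT) r = shiftSeq (omegaSeq T hT) r' := by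
  funext t
  simp only [shiftSeq, omegaSeq_eq]
  have : (r + t) % T.length = (r' + t) % T.length := by
    rw [← Nat.mod_add_mod, h, Nat.mod_add_mod]
  simp only [this]

section Lex
variable [LinearOrder α]

theorem lex_irrefl : ∀ x : List α, ¬ List.Lex (· < ·) x x := by
  intro x
  induction x with
  | nil => intro h; cases h
  | cons a l ih => intro h; cases h with
    | cons h => exact ih h
    | rel h => exact lt_irrefl _ h

theorem lex_find' {x y : List α} (h : List.Lex (· < ·) x y) :
    x <+: y ∨ ∃ k, ∃ (h1 : k < x.length) (h2 : k < y.length),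
      (∀ m (hm1 : m < x.length) (hm2 : m < y.length), m < k → x[m] = y[m]) ∧ x[k] < y[k] := by
  induction h with
  | nil => exact Or.inl (List.nil_prefix)
  | @rel a l₁ b l₂ hab =>
    exact Or.inr ⟨0, by simp, by simp, fun m _ _ hm => by omega, by simpa using hab⟩
  | @cons a l₁ l₂ h ih =>
    rcases ih with hp | ⟨k, h1, h2, hag, hlt⟩
    · exact Or.inl (List.cons_prefix_cons.mpr ⟨rfl, hp⟩)
    · refine Or.inr ⟨k + 1, by simpa using h1, by simpa using h2, ?_, by simpa using hlt⟩
      intro m hm1 hm2 hmk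
      match m with
      | 0 => simp
      | s + 1 =>
        simp only [List.getElem_cons_succ]
        exact hag s (by simpa using hm1) (by simpa using hm2) (by omega)

theorem lex_of_firstdiff :
    ∀ (k : ℕ) (x y : List α) (h1 : k < x.length) (h2 : k < y.length),
      (∀ m (hm1 : m < x.length) (hm2 : m < y.length), m < k → x[m] = y[m]) →
      x[k] < y[k] → List.Lex (· < ·) x y := by
  intro k
  induction k with
  | zero =>
    intro x y h1 h2 _ hlt
    match x, y with
    | a :: xs, b :: ys => exact List.Lex.rel (by simpa using hlt)
  | succ k ih =>
    intro x y h1 h2 hag hlt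
    match x, y with
    | a :: xs, b :: ys =>
      have hab : a = b := hag 0 (by simp) (by simp) (by omega)
      subst hab
      refine List.Lex.cons (ih xs ys (by simpa using h1) (by simpa using h2) ?_
        (by simpa using hlt))
      intro m hm1 hm2 hmk
      have := hag (m + 1) (by simpa using hm1) (by simpa using hm2) (by omega)
      simpa using this

theorem lexLt_iff_seq {x y : List α} (hx : x ≠ []) (hy : y ≠ []) (hlen : x.length = y.length) :
    LexLt x y ↔ SeqLexLt (omegaSeq x hx) (omegaSeq y hy) := by
  constructor
  · intro h
    rcases lex_find' h with hp | ⟨k, h1, h2, hag, hlt⟩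
    · exact absurd (hp.eq_of_length hlen ▸ h) (lex_irrefl y)
    · refine ⟨k, fun m hm => ?_, ?_⟩
      · rw [omegaSeq_lt _ _ (hm.trans h1), omegaSeq_lt _ _ (hm.trans h2)]
        exact hag m (hm.trans h1) (hm.trans h2) hm
      · rw [omegaSeq_lt _ _ h1, omegaSeq_lt _ _ h2]; exact hlt
  · rintro ⟨k, hag, hlt⟩
    have hk : k < x.length := by
      by_contra hk
      push_neg at hk
      have hxy : x = y := by
        apply List.ext_getElem hlen
        intro m hm1 hm2
        have := hag m (lt_of_lt_of_le hm1 hk)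
        rwa [omegaSeq_lt _ _ hm1, omegaSeq_lt _ _ hm2] at this
      rw [omega_congr_list hx hy hxy] at hlt
      exact absurd hlt (lt_irrefl _)
    refine lex_of_firstdiff k x y hk (hlen ▸ hk) (fun m hm1 hm2 hmk => ?_) ?_
    · have := hag m hmk
      rwa [omegaSeq_lt _ _ hm1, omegaSeq_lt _ _ hm2] at this
    · have := hlt
      rwa [omegaSeq_lt _ _ hk, omegaSeq_lt _ _ (hlen ▸ hk)] at this

end Lex



section SL
variable [LinearOrder α]

/-- sequence-level S-type at offset `m` -/
def SpS (f : ℕ → α) (m : ℕ) : Prop := SeqLexLt (shiftSeq f m) (shiftSeq f (m + 1))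

/-- sequence-level L-type at offset `m` -/
def LpS (f : ℕ → α) (m : ℕ) : Prop := SeqLexLt (shiftSeq f (m + 1)) (shiftSeq f m)

theorem sp_char (f : ℕ → α) (m : ℕ) :
    SpS f m ↔ ∃ t, 0 < t ∧ (∀ s, s < t → f (m + s) = f m) ∧ f m < f (m + t) := by
  constructor
  · rintro ⟨u, hag, hlt⟩
    have hconst : ∀ s, s ≤ u → f (m + s) = f m := by
      intro s hs
      induction s with
      | zero => rfl
      | succ s ih =>
        have h1 : f (m + (s + 1)) = f (m + s) := by
          have := hag s (by omega)
          simp only [shiftSeq] at this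
          rw [show m + (s + 1) = m + 1 + s by omega]
          exact this.symm
        rw [h1, ih (by omega)]
    refine ⟨u + 1, by omega, fun s hs => hconst s (by omega), ?_⟩
    have := hlt
    simp only [shiftSeq] at this
    rw [show m + (u + 1) = m + 1 + u by omega, ← hconst u le_rfl]
    exact this
  · rintro ⟨t, ht0, hconst, hlt⟩
    refine ⟨t - 1, fun s hs => ?_, ?_⟩
    · simp only [shiftSeq]
      rw [hconst s (by omega), show m + 1 + s = m + (s + 1) by omega, hconst (s + 1) (by omega)]
    · simp only [shiftSeq]
      rw [hconst (t - 1) (by omega), show m + 1 + (t - 1) = m + t by omega]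
      exact hlt

theorem lp_char (f : ℕ → α) (m : ℕ) :
    LpS f m ↔ ∃ t, 0 < t ∧ (∀ s, s < t → f (m + s) = f m) ∧ f (m + t) < f m := by
  constructor
  · rintro ⟨u, hag, hlt⟩
    have hconst : ∀ s, s ≤ u → f (m + s) = f m := by
      intro s hs
      induction s with
      | zero => rfl
      | succ s ih =>
        have h1 : f (m + (s + 1)) = f (m + s) := by
          have := hag s (by omega)
          simp only [shiftSeq] at this
          rw [show m + (s + 1) = m + 1 + s by omega]
          exact this
        rw [h1, ih (by omega)]
    refine ⟨u + 1, by omega, fun s hs => hconst s (by omega), ?_⟩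
    have := hlt
    simp only [shiftSeq] at this
    rw [show m + (u + 1) = m + 1 + u by omega, ← hconst u le_rfl]
    exact this
  · rintro ⟨t, ht0, hconst, hlt⟩
    refine ⟨t - 1, fun s hs => ?_, ?_⟩
    · simp only [shiftSeq]
      rw [hconst s (by omega), show m + 1 + s = m + (s + 1) by omega, hconst (s + 1) (by omega)]
    · simp only [shiftSeq]
      rw [hconst (t - 1) (by omega), show m + 1 + (t - 1) = m + t by omega]
      exact hlt

theorem helper2 [LinearOrder α] {T : List α} (hT : T ≠ []) {u v u' v' : ℕ}
    (hu : u % T.length = u' % T.length) (hv : v % T.length = v' % T.length) :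
    LexLt (T.rotate u) (T.rotate v) ↔
      SeqLexLt (shiftSeq (omegaSeq T hT) u') (shiftSeq (omegaSeq T hT) v') := by
  rw [lexLt_iff_seq (rotate_ne_nil hT u) (rotate_ne_nil hT v) (by simp),
      omegaSeq_rotate T hT u, omegaSeq_rotate T hT v,
      shiftSeq_omega_congr T hT hu, shiftSeq_omega_congr T hT hv]

theorem listPow_singleton (c : α) : ∀ n, listPow [c] n = List.replicate n c
  | 0 => rfl
  | n + 1 => by
      simp [listPow, listPow_singleton c n, List.replicate_succ]

theorem not_const_of_primitive {T : List α} (hT : IsPrimitiveStr T) (hT2 : 2 ≤ T.length)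
    (c : α) (h : ∀ x ∈ T, x = c) : False := by
  have hrep : T = List.replicate T.length c := List.eq_replicate_iff.mpr ⟨rfl, h⟩
  have := (hT.2 [c] T.length (by rw [listPow_singleton]; exact hrep)).2
  omega

theorem shift_ne {T : List α} (hT : IsPrimitiveStr T) (hT2 : 2 ≤ T.length) (r m : ℕ) :
    shiftSeq (omegaSeq (T.rotate r) (rotate_ne_nil hT.1 r)) m
      ≠ shiftSeq (omegaSeq (T.rotate r) (rotate_ne_nil hT.1 r)) (m + 1) := by
  intro heq
  have hL : (T.rotate r).length = T.length := List.length_rotate T r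
  have hn0 : 0 < T.length := by omega
  set f := omegaSeq (T.rotate r) (rotate_ne_nil hT.1 r) with hf
  have hstep : ∀ t, f (m + t) = f (m + t + 1) := by
    intro t
    have := congrFun heq t
    simp only [shiftSeq] at this
    rw [show m + 1 + t = m + t + 1 from by omega] at this
    exact this
  have hconst : ∀ t, f (m + t) = f m := by
    intro t
    induction t with
    | zero => rfl
    | succ t ih => rw [show m + (t + 1) = m + t + 1 from by omega, ← hstep t, ih]
  have hall : ∀ u, f u = f m := by
    intro u
    have h1 : f (u % T.length + m * T.length) = f u := by
      rw [hf]
      rw [show u % T.length = u % (T.rotate r).length from by rw [hL]]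
      rw [show m * T.length = m * (T.rotate r).length from by rw [hL]]
      rw [omegaSeq_add_mul]
      simp only [omegaSeq_eq, Nat.mod_mod_of_dvd _ dvd_rfl]
    have h2 : u % T.length + m * T.length = m + (u % T.length + m * T.length - m) := by
      have : m ≤ m * T.length := Nat.le_mul_of_pos_right m hn0
      omega
    rw [← h1, h2, hconst]
  apply not_const_of_primitive hT hT2 (f m)
  intro x hx
  have hx' : x ∈ T.rotate r := List.mem_rotate.mpr hx
  obtain ⟨k, hk, hkx⟩ := List.mem_iff_getElem.mp hx'
  have : f k = x := by
    rw [hf, omegaSeq_lt _ _ hk]; exact hkx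
  rw [← this, hall k]

theorem sp_or_lp [LinearOrder α] {T : List α} (hT : IsPrimitiveStr T) (hT2 : 2 ≤ T.length)
    (r m : ℕ) :
    SpS (omegaSeq (T.rotate r) (rotate_ne_nil hT.1 r)) m ∨
      LpS (omegaSeq (T.rotate r) (rotate_ne_nil hT.1 r)) m :=
  seqLexLt_total (shift_ne hT hT2 r m)

theorem isLMS_char [LinearOrder α] {T : List α} (hT : T ≠ []) {i m : ℕ}
    (hi : 1 ≤ i) (hm : 1 ≤ m) :
    IsLMS T ((i + m - 1) % T.length + 1) ↔
      SpS (omegaSeq (conj T i) (conj_ne_nil hT i)) m ∧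
      LpS (omegaSeq (conj T i) (conj_ne_nil hT i)) (m - 1) := by
  have hn0 : 0 < T.length := List.length_pos_iff.mpr hT
  have hfi : omegaSeq (conj T i) (conj_ne_nil hT i) = shiftSeq (omegaSeq T hT) (i - 1) :=
    omegaSeq_rotate T hT (i - 1)
  rw [hfi]
  unfold SpS LpS
  simp only [shiftSeq_shiftSeq]
  rw [show i - 1 + (m + 1) = i - 1 + m + 1 from by omega,
      show i - 1 + (m - 1 + 1) = i - 1 + m from by omega,
      show i - 1 + (m - 1) = i - 1 + m - 1 from by omega,
      show i + m - 1 = i - 1 + m from by omega]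
  set r := i - 1 + m with hr
  have hr1 : 1 ≤ r := by omega
  have hST : SType T (r % T.length + 1) ↔
      SeqLexLt (shiftSeq (omegaSeq T hT) r) (shiftSeq (omegaSeq T hT) (r + 1)) := by
    unfold SType
    have e1 : conj T (r % T.length + 1) = T.rotate (r % T.length) := by simp [conj]
    have e2 : conj T (r % T.length + 1 + 1) = T.rotate (r % T.length + 1) := by simp [conj]
    rw [e1, e2]
    exact helper2 hT (Nat.mod_mod_of_dvd r dvd_rfl) (by rw [Nat.mod_add_mod])
  have hLT : LType T (if r % T.length + 1 = 1 then T.length else r % T.length + 1 - 1) ↔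
      SeqLexLt (shiftSeq (omegaSeq T hT) r) (shiftSeq (omegaSeq T hT) (r - 1)) := by
    by_cases hp : r % T.length = 0
    · rw [if_pos (by omega)]
      unfold LType
      have e1 : conj T (T.length + 1) = T.rotate T.length := by simp [conj]
      have e2 : conj T T.length = T.rotate (T.length - 1) := by simp [conj]
      rw [e1, e2]
      apply helper2 hT
      · rw [Nat.mod_self, hp]
      · have step1 : (r - 1) % T.length = ((T.length - 1) + r) % T.length := by
          rw [← Nat.add_mod_right (r - 1) T.length]
          congr 1
          omega
        rw [step1, Nat.add_mod, hp, Nat.add_zero, Nat.mod_mod_of_dvd _ dvd_rfl]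
    · rw [if_neg (by omega)]
      unfold LType
      have e1 : conj T (r % T.length + 1 - 1 + 1) = T.rotate (r % T.length) := by simp [conj]
      have e2 : conj T (r % T.length + 1 - 1) = T.rotate (r % T.length - 1) := by simp [conj]
      rw [e1, e2]
      apply helper2 hT
      · exact Nat.mod_mod_of_dvd r dvd_rfl
      · have hd := Nat.div_add_mod r T.length
        have h2 : r - 1 = (r % T.length - 1) + T.length * (r / T.length) := by omega
        rw [h2, Nat.add_mul_mod_self_left]
  unfold IsLMS
  rw [hST, hLT]

theorem exists_lms {T : List α} (hT : IsPrimitiveStr T) (hT2 : 2 ≤ T.length)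
    {j : ℕ} (hj : 1 ≤ j) :
    ∃ m, 0 < m ∧ IsLMS T ((j + m - 1) % T.length + 1) := by
  have hTne := hT.1
  set g := omegaSeq (conj T j) (conj_ne_nil hTne j) with hg
  have hSL : ∀ m, SpS g m ∨ LpS g m := fun m => sp_or_lp hT hT2 (j - 1) m
  have hgper : ∀ u, g (u + T.length) = g u := by
    intro u
    have hlen : (conj T j).length = T.length := by simp [conj]
    rw [hg]
    conv_lhs => rw [← hlen]
    simp only [omegaSeq_eq, Nat.add_mod_right]
  have hperS : ∀ m, shiftSeq g (m + T.length) = shiftSeq g m := by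
    intro m
    funext t
    simp only [shiftSeq]
    rw [show m + T.length + t = (m + t) + T.length from by omega, hgper]
  have hLper : ∀ m, LpS g (m + T.length) ↔ LpS g m := by
    intro m
    unfold LpS
    rw [hperS, show m + T.length + 1 = (m + 1) + T.length from by omega, hperS]
  by_contra hcon
  push_neg at hcon
  have hcon' : ∀ m, 0 < m → ¬ (SpS g m ∧ LpS g (m - 1)) := by
    intro m hm hsp
    exact hcon m hm ((isLMS_char hTne hj hm).mpr hsp)
  have step : ∀ m, LpS g m → LpS g (m + 1) := by
    intro m hL
    rcases hSL (m + 1) with hS | hL'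
    · exact absurd ⟨hS, hL⟩ (hcon' (m + 1) (by omega))
    · exact hL'
  have mono : ∀ m s, LpS g m → LpS g (m + s) := by
    intro m s hL
    induction s with
    | zero => exact hL
    | succ s ih => rw [show m + (s + 1) = (m + s) + 1 from by omega]; exact step _ ih
  have hdown : ∀ c, LpS g (c * T.length) → LpS g 0 := by
    intro c
    induction c with
    | zero => simp
    | succ c ih =>
      intro h
      apply ih
      rw [show (c + 1) * T.length = c * T.length + T.length from by ring] at h
      exact (hLper _).mp h
  have chainS : (∀ m, SpS g m) → False := by
    intro hall
    have key : ∀ c, 0 < c → SeqLexLt (shiftSeq g 0) (shiftSeq g c) := by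
      intro c hc
      induction c with
      | zero => omega
      | succ c ih =>
        rcases Nat.eq_zero_or_pos c with h0 | hc'
        · subst h0; exact hall 0
        · exact seqLexLt_trans (ih hc') (hall c)
      
    have h1 := key T.length (by omega)
    rw [show T.length = 0 + T.length from by omega, hperS 0] at h1
    exact seqLexLt_irrefl _ h1
  have chainL : (∀ m, LpS g m) → False := by
    intro hall
    have key : ∀ c, 0 < c → SeqLexLt (shiftSeq g c) (shiftSeq g 0) := by
      intro c hc
      induction c with
      | zero => omega
      | succ c ih =>
        rcases Nat.eq_zero_or_pos c with h0 | hc'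
        · subst h0; exact hall 0
        · exact seqLexLt_trans (hall c) (ih hc')
    have h1 := key T.length (by omega)
    rw [show T.length = 0 + T.length from by omega, hperS 0] at h1
    exact seqLexLt_irrefl _ h1
  rcases hSL 0 with hS0 | hL0
  · by_cases hLex : ∃ m, LpS g m
    · obtain ⟨m, hLm⟩ := hLex
      have hmle : m ≤ (m + 1) * T.length := by
        have : m + 1 ≤ (m + 1) * T.length := Nat.le_mul_of_pos_right _ (by omega)
        omega
      have h2 : LpS g ((m + 1) * T.length) := by
        have := mono m ((m + 1) * T.length - m) hLm
        rw [show m + ((m + 1) * T.length - m) = (m + 1) * T.length from by omega] at this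
        exact this
      exact seqLexLt_asymm hS0 (hdown _ h2)
    · push_neg at hLex
      exact chainS (fun m => (hSL m).resolve_right (hLex m))
  · refine chainL (fun m => ?_)
    have := mono 0 m hL0
    rwa [Nat.zero_add] at this

theorem core_case1 {f g : ℕ → α} {d : ℕ} (hd : 0 < d)
    (hSg : SpS g d) (hLg : LpS g (d - 1))
    (hnf : ¬ (SpS f d ∧ LpS f (d - 1)))
    (hfl : SpS f d ∨ LpS f d)
    (hagree : ∀ t, t ≤ d → f t = g t)
    (hne : f ≠ g) : SeqLexLt f g := by
  classical
  have hex : ∃ u, f u ≠ g u := Function.ne_iff.mp hne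
  set k := Nat.find hex with hk
  have hkspec : f k ≠ g k := Nat.find_spec hex
  have hkag : ∀ u, u < k → f u = g u := fun u hu => by
    by_contra hc
    have := Nat.find_le (h := hex) hc
    omega
  have hkd : d < k := by
    rcases lt_or_ge d k with h | h
    · exact h
    · exact absurd (hagree k (by omega)) hkspec
  rcases lt_or_gt_of_ne hkspec with hlt | hgt
  · exact ⟨k, hkag, hlt⟩
  exfalso
  have hgd : g d < g (d - 1) := by
    obtain ⟨t, ht0, hconst, hlt⟩ := (lp_char g (d - 1)).mp hLg
    rcases eq_or_lt_of_le (show 1 ≤ t from by omega) with h1 | h1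
    · have h1' : t = 1 := h1.symm
      subst h1'
      rwa [show d - 1 + 1 = d from by omega] at hlt
    · exfalso
      have e0 : g d = g (d - 1) := by
        have := hconst 1 (by omega)
        rwa [show d - 1 + 1 = d from by omega] at this
      have hLgd : LpS g d := by
        apply (lp_char g d).mpr
        refine ⟨t - 1, by omega, ?_, ?_⟩
        · intro s hs
          have := hconst (s + 1) (by omega)
          rw [show d - 1 + (s + 1) = d + s from by omega] at this
          rw [this, e0]
        · rw [show d + (t - 1) = d - 1 + t from by omega, e0]
          exact hlt
      exact seqLexLt_asymm hSg hLgd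
  have hfd : f d = g d := hagree d le_rfl
  have hfd1 : f (d - 1) = g (d - 1) := hagree _ (by omega)
  have hLf1 : LpS f (d - 1) := by
    apply (lp_char f (d - 1)).mpr
    refine ⟨1, one_pos, ?_, ?_⟩
    · intro s hs
      have hs0 : s = 0 := by omega
      subst hs0; rfl
    · rw [show d - 1 + 1 = d from by omega, hfd, hfd1]
      exact hgd
  have hnSf : ¬ SpS f d := fun hS => hnf ⟨hS, hLf1⟩
  have hLf : LpS f d := hfl.resolve_left hnSf
  obtain ⟨tf, htf0, hcf, hflt⟩ := (lp_char f d).mp hLf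
  obtain ⟨tg, htg0, hcg, hggt⟩ := (sp_char g d).mp hSg
  have h1 : ¬ (d + tf < k) := by
    intro hc
    have he : f (d + tf) = g (d + tf) := hkag _ hc
    rcases lt_trichotomy tf tg with h | h | h
    · have e : g (d + tf) = g d := hcg tf h
      rw [e, ← hfd] at he
      exact absurd he (ne_of_lt hflt)
    · subst h
      have h2 : f (d + tf) < g (d + tf) := (hflt.trans_eq hfd).trans hggt
      exact absurd he (ne_of_lt h2)
    · have h3 : d + tg < k := by omega
      have he2 : f (d + tg) = g (d + tg) := hkag _ h3
      have e : f (d + tg) = f d := hcf tg h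
      rw [e, hfd] at he2
      exact absurd he2.symm (ne_of_gt hggt)
  push_neg at h1
  have hfk : f k ≤ f d := by
    rcases eq_or_lt_of_le h1 with he | hlt2
    · rw [he]
      exact le_of_lt hflt
    · have := hcf (k - d) (by omega)
      rw [show d + (k - d) = k from by omega] at this
      exact le_of_eq this
  have hgk : g k < g d := by
    have := lt_of_lt_of_le hgt hfk
    rwa [hfd] at this
  rcases lt_trichotomy (k - d) tg with h | h | h
  · have e : g k = g d := by
      have := hcg (k - d) h
      rwa [show d + (k - d) = k from by omega] at this
    rw [e] at hgk
    exact lt_irrefl _ hgk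
  · have hkeq : k = d + tg := by omega
    rw [hkeq] at hgk
    exact absurd hgk (not_lt_of_gt hggt)
  · have h4 : d + tg < k := by omega
    have htgf : tg < tf := by omega
    have e1 : f (d + tg) = f d := hcf tg htgf
    have e2 : f (d + tg) = g (d + tg) := hkag _ h4
    have : g d < f d := by
      calc g d < g (d + tg) := hggt
      _ = f (d + tg) := e2.symm
      _ = f d := e1
    rw [hfd] at this
    exact lt_irrefl _ this

end SL
end Aux14

open Aux14

/-- For primitive strings `A`, `B` of length `≥ 2`, positions
`1 ≤ i ≤ |A|`, `1 ≤ j ≤ |B|`, with `U`, `V` the LMS-prefixes of `conj_i(A)`,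
`conj_j(B)`: if `U <_LMS V` then `conj_i(A) ≺_ω conj_j(B)`. -/
theorem omegaLt_of_lmsLt {α : Type*} [LinearOrder α] (A B : List α)
    (hA : IsPrimitiveStr A) (hB : IsPrimitiveStr B)
    (hA2 : 2 ≤ A.length) (hB2 : 2 ≤ B.length)
    (i j : ℕ) (hi1 : 1 ≤ i) (hi2 : i ≤ A.length) (hj1 : 1 ≤ j) (hj2 : j ≤ B.length)
    (h : LMSLt (lmsPrefix A i) (lmsPrefix B j)) :
    OmegaLt (conj A i) (conj B j) := by
  classical
  have hAne : A ≠ [] := hA.1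
  have hBne : B ≠ [] := hB.1
  have hlenA : (conj A i).length = A.length := by simp [conj]
  have hlenB : (conj B j).length = B.length := by simp [conj]
  set f := omegaSeq (conj A i) (conj_ne_nil hAne i) with hfdef
  set g := omegaSeq (conj B j) (conj_ne_nil hBne j) with hgdef
  have hUget : ∀ k (hk : k < (lmsPrefix A i).length), (lmsPrefix A i)[k] = f k := by
    intro k hk
    have hk2 : k < (conj A i).length + (conj A i).length := by
      have hk' := hk
      simp only [lmsPrefix, List.length_take, List.length_append] at hk'
      omega
    simp only [lmsPrefix]
    rw [List.getElem_take, List.getElem_append]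
    by_cases hc : k < (conj A i).length
    · rw [dif_pos hc, hfdef, omegaSeq_lt _ _ hc]
    · rw [dif_neg hc]
      have hkk : k - (conj A i).length < (conj A i).length := by omega
      have hper : f k = f (k - (conj A i).length) := by
        rw [hfdef]
        conv_lhs => rw [show k = (k - (conj A i).length) + 1 * (conj A i).length from by omega]
        exact omegaSeq_add_mul (conj A i) (conj_ne_nil hAne i) (k - (conj A i).length) 1
      rw [hper, hfdef, omegaSeq_lt _ _ hkk]
  have hVget : ∀ k (hk : k < (lmsPrefix B j).length), (lmsPrefix B j)[k] = g k := by
    intro k hk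
    have hk2 : k < (conj B j).length + (conj B j).length := by
      have hk' := hk
      simp only [lmsPrefix, List.length_take, List.length_append] at hk'
      omega
    simp only [lmsPrefix]
    rw [List.getElem_take, List.getElem_append]
    by_cases hc : k < (conj B j).length
    · rw [dif_pos hc, hgdef, omegaSeq_lt _ _ hc]
    · rw [dif_neg hc]
      have hkk : k - (conj B j).length < (conj B j).length := by omega
      have hper : g k = g (k - (conj B j).length) := by
        rw [hgdef]
        conv_lhs => rw [show k = (k - (conj B j).length) + 1 * (conj B j).length from by omega]
        exact omegaSeq_add_mul (conj B j) (conj_ne_nil hBne j) (k - (conj B j).length) 1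
      rw [hper, hgdef, omegaSeq_lt _ _ hkk]
  have hUlen_le : (lmsPrefix A i).length ≤ lmsDist A i + 1 := by
    simp only [lmsPrefix, List.length_take, List.length_append]
    omega
  have hdBle : lmsDist B j ≤ B.length := by
    obtain ⟨m, hm0, hmL⟩ := exists_lms hB hB2 hj1
    have hmod : (j + ((m - 1) % B.length + 1) - 1) % B.length = (j + m - 1) % B.length := by
      rw [show j + ((m - 1) % B.length + 1) - 1 = j + (m - 1) % B.length from by omega,
          Nat.add_mod_mod, show j + (m - 1) = j + m - 1 from by omega]
    have hmem : (m - 1) % B.length + 1 ∈ {m | 0 < m ∧ IsLMS B ((j + m - 1) % B.length + 1)} := by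
      refine ⟨by omega, ?_⟩
      show IsLMS B ((j + ((m - 1) % B.length + 1) - 1) % B.length + 1)
      rw [hmod]
      exact hmL
    have hle : lmsDist B j ≤ (m - 1) % B.length + 1 := Nat.sInf_le hmem
    have hlt : (m - 1) % B.length < B.length := Nat.mod_lt _ (by omega)
    omega
  have hdBmem : 0 < lmsDist B j ∧ IsLMS B ((j + lmsDist B j - 1) % B.length + 1) :=
    Nat.sInf_mem (exists_lms hB hB2 hj1)
  rcases h with ⟨hVU, hVne⟩ | ⟨hnUV, hnVU, hlex⟩
  · -- V is a proper prefix of U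
    have hVlen : (lmsPrefix B j).length = lmsDist B j + 1 := by
      simp only [lmsPrefix, List.length_take, List.length_append, hlenB]
      omega
    have hlenVU : (lmsPrefix B j).length < (lmsPrefix A i).length :=
      lt_of_le_of_ne hVU.length_le (fun he => hVne (hVU.eq_of_length he))
    have hdAB : lmsDist B j < lmsDist A i := by omega
    have hagree : ∀ t, t ≤ lmsDist B j → f t = g t := by
      intro t ht
      have htV : t < (lmsPrefix B j).length := by omega
      have htU : t < (lmsPrefix A i).length := by omega
      rw [← hUget t htU, ← hVget t htV]
      exact (hVU.getElem htV).symm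
    have hdB1 : 1 ≤ lmsDist B j := hdBmem.1
    have hchB := (isLMS_char hBne hj1 hdB1).mp hdBmem.2
    rw [← hgdef] at hchB
    have hnotA : ¬ (SpS f (lmsDist B j) ∧ LpS f (lmsDist B j - 1)) := by
      intro hsp
      have hmem : lmsDist B j ∈ {m | 0 < m ∧ IsLMS A ((i + m - 1) % A.length + 1)} :=
        ⟨by omega, (isLMS_char hAne hi1 hdB1).mpr (by rw [← hfdef]; exact hsp)⟩
      have hle : lmsDist A i ≤ lmsDist B j := Nat.sInf_le hmem
      omega
    have hflOr : SpS f (lmsDist B j) ∨ LpS f (lmsDist B j) := by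
      rw [hfdef]
      exact sp_or_lp hA hA2 (i - 1) (lmsDist B j)
    have hne : f ≠ g := by
      intro hfg
      have hsetseq : {m | 0 < m ∧ IsLMS A ((i + m - 1) % A.length + 1)} =
          {m | 0 < m ∧ IsLMS B ((j + m - 1) % B.length + 1)} := by
        ext m
        simp only [Set.mem_setOf_eq]
        constructor
        · rintro ⟨hm0, hml⟩
          refine ⟨hm0, (isLMS_char hBne hj1 hm0).mpr ?_⟩
          have hthis := (isLMS_char hAne hi1 hm0).mp hml
          rw [← hfdef, hfg, hgdef] at hthis
          exact hthis
        · rintro ⟨hm0, hml⟩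
          refine ⟨hm0, (isLMS_char hAne hi1 hm0).mpr ?_⟩
          have hthis := (isLMS_char hBne hj1 hm0).mp hml
          rw [← hgdef, ← hfg, hfdef] at hthis
          exact hthis
      have heq : lmsDist A i = lmsDist B j := congrArg sInf hsetseq
      omega
    refine ⟨conj_ne_nil hAne i, conj_ne_nil hBne j, Or.inr ?_⟩
    rw [← hfdef, ← hgdef]
    exact core_case1 hdBmem.1 hchB.1 hchB.2 hnotA hflOr hagree hne
  · -- incomparable, lexicographic case
    rcases lex_find' hlex with hp | ⟨k, h1, h2, hag, hlt⟩
    · exact absurd hp hnUV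
    · refine ⟨conj_ne_nil hAne i, conj_ne_nil hBne j, Or.inr ?_⟩
      rw [← hfdef, ← hgdef]
      refine ⟨k, ?_, ?_⟩
      · intro mm hmm
        have hthis := hag mm (hmm.trans h1) (hmm.trans h2) hmm
        rwa [hUget mm (hmm.trans h1), hVget mm (hmm.trans h2)] at hthis
      · have hthis := hlt
        rwa [hUget k h1, hVget k h2] at hthis
end

section
/- Let w ≥ 1, let E be a set of strings of length w over an alphabet Σ (the trigger strings), and let D be a set of strings (the dictionary) such that every d ∈ D has length strictly greater than w, the length-w prefix of d is in E, the length-w suffix of d is in E, and no element of E occurs in d starting at any position other than 1 and |d| − w + 1. Then the set S = { s : s is a suffix of some d ∈ D and |s| > w } is prefix-free, i.e., no element of S is a proper prefix of another element of S. -/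
/-- In prefix-free parsing with window length `w ≥ 1`, trigger
strings `E` (all of length `w`) and dictionary `D` (phrases of length `> w`
starting and ending with a trigger string, with no other occurrence of a trigger
string), the set `S` of suffixes of dictionary phrases of length `> w` is
prefix-free: no element of `S` is a proper prefix of another. -/
theorem pfp_suffixes_prefixFree {α : Type*} (w : ℕ) (hw : 1 ≤ w)
    (E : Set (List α)) (hE : ∀ e ∈ E, e.length = w)
    (D : Set (List α))
    (hDlen : ∀ d ∈ D, w < d.length)
    (hDpre : ∀ d ∈ D, d.take w ∈ E)
    (hDsuf : ∀ d ∈ D, d.drop (d.length - w) ∈ E)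
    (hocc : ∀ d ∈ D, ∀ e ∈ E, ∀ p : ℕ, 1 ≤ p → e <+: d.drop (p - 1) →
      p = 1 ∨ p = d.length - w + 1) :
    ∀ s₁ ∈ {s : List α | ∃ d ∈ D, s <:+ d ∧ w < s.length},
      ∀ s₂ ∈ {s : List α | ∃ d ∈ D, s <:+ d ∧ w < s.length},
        s₁ <+: s₂ → s₁ = s₂ := by
  rintro s₁ ⟨d₁, hd₁, ⟨v, rfl⟩, hl₁⟩ s₂ ⟨d₂, hd₂, ⟨u, rfl⟩, hl₂⟩ ⟨t, rfl⟩
  set e := s₁.drop (s₁.length - w) with he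
  have heE : e ∈ E := by
    have h1 := hDsuf _ hd₁
    have h2 : (v ++ s₁).length - w = v.length + (s₁.length - w) := by
      rw [List.length_append]; omega
    rwa [h2, List.drop_length_add_append] at h1
  have hoccur : e <+: (u ++ (s₁ ++ t)).drop ((u.length + (s₁.length - w) + 1) - 1) := by
    rw [Nat.add_sub_cancel, List.drop_length_add_append,
      List.drop_append_of_le_length (by omega)]
    exact ⟨t, rfl⟩
  have := hocc _ hd₂ e heE _ (by omega) hoccur
  have hlen2 : (u ++ (s₁ ++ t)).length = u.length + s₁.length + t.length := by
    simp [Nat.add_assoc]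
  rw [hlen2] at this
  have ht : t.length = 0 := by omega
  rw [List.length_eq_zero_iff.mp ht, List.append_nil]
end
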